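/- For the lazy random walk on a connected weighted graph, starting from any probability distribution p, the ℓ1 distance to stationarity after t steps satisfies ||X^t p - π||_1 <= e^{-t ν₂ / 2} · n · d_max / d_min, where ν₂ is the second smallest eigenvalue of the normalized Laplacian D^{-1/2} L D^{-1/2}. -/

import Mathlib

open Matrix BigOperators

/-- The second smallest eigenvalue of a symmetric matrix, via the
Courant–Fischer min-max characterization: the infimum over 2-dimensional subspaces
of the supremum of the Rayleigh quotient. -/
noncomputable def lambda2 {ι : Type*} [Fintype ι] (M : Matrix ι ι ℝ) : ℝ :=
  ⨅ U : {U : Submodule ℝ (ι → ℝ) // Module.finrank ℝ U = 2},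
    ⨆ x : {x : ι → ℝ // x ∈ U.1 ∧ x ≠ 0},
      (x.1 ⬝ᵥ M.mulVec x.1) / (x.1 ⬝ᵥ x.1)

private lemma swap_sum {n : ℕ} {A : Matrix (Fin n) (Fin n) ℝ}
    (hsym : ∀ i j, A i j = A j i) (f : Fin n → ℝ) :
    ∑ i, ∑ j, A i j * f j = ∑ i, ∑ j, A i j * f i := by
  rw [Finset.sum_comm]
  exact Finset.sum_congr rfl fun i _ => Finset.sum_congr rfl fun j _ => by rw [hsym]

private lemma lap_quad {n : ℕ} {A : Matrix (Fin n) (Fin n) ℝ}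
    (hsym : ∀ i j, A i j = A j i) (v : Fin n → ℝ) :
    v ⬝ᵥ ((Matrix.diagonal (fun i => ∑ j, A i j) - A) *ᵥ v)
      = (1/2) * ∑ i, ∑ j, A i j * (v i - v j)^2 := by
  have hsum : ∀ i, ((Matrix.diagonal (fun i => ∑ j, A i j) - A) *ᵥ v) i
      = ∑ j, (A i j * v i - A i j * v j) := by
    intro i
    rw [Matrix.sub_mulVec]
    simp only [Pi.sub_apply, mulVec_diagonal, Finset.sum_sub_distrib, Finset.sum_mul]
    simp [mulVec, dotProduct]
  calc v ⬝ᵥ ((Matrix.diagonal (fun i => ∑ j, A i j) - A) *ᵥ v)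
      = ∑ i, ∑ j, v i * (A i j * v i - A i j * v j) := by
        simp only [dotProduct, hsum, Finset.mul_sum]
    _ = ∑ i, ∑ j, (1/2 * (A i j * (v i - v j)^2) + (1/2 * (A i j * v i^2) - 1/2 * (A i j * v j^2))) := by
        exact Finset.sum_congr rfl fun i _ => Finset.sum_congr rfl fun j _ => by ring
    _ = (1/2) * ∑ i, ∑ j, A i j * (v i - v j)^2 := by
        simp only [Finset.sum_add_distrib, Finset.sum_sub_distrib, ← Finset.mul_sum]
        rw [swap_sum hsym (fun i => v i ^ 2)]
        ring

private lemma ob_dot {n : ℕ} (b : OrthonormalBasis (Fin n) ℝ (EuclideanSpace ℝ (Fin n)))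
    (w : Fin n → ℝ) (k : Fin n) : (b k : Fin n → ℝ) ⬝ᵥ w = b.repr (WithLp.toLp 2 w) k := by
  rw [b.repr_apply_apply]
  simp [PiLp.inner_apply, RCLike.inner_apply, dotProduct, mul_comm]

private lemma ob_expand {n : ℕ} (b : OrthonormalBasis (Fin n) ℝ (EuclideanSpace ℝ (Fin n)))
    (w : Fin n → ℝ) (x : Fin n) :
    w x = ∑ k, ((b k : Fin n → ℝ) ⬝ᵥ w) * (b k : Fin n → ℝ) x := by
  have he : ∑ k, ((b k : Fin n → ℝ) ⬝ᵥ w) • (b k : Fin n → ℝ) = w := by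
    calc ∑ k, ((b k : Fin n → ℝ) ⬝ᵥ w) • (b k : Fin n → ℝ)
        = ∑ k, b.repr (WithLp.toLp 2 w) k • (b k : Fin n → ℝ) := by simp_rw [ob_dot]
      _ = w := by
        have := congrArg WithLp.ofLp (b.sum_repr (WithLp.toLp 2 w))
        simpa using this
  conv_lhs => rw [← he]
  exact Finset.sum_apply x Finset.univ _

private lemma ob_parseval {n : ℕ} (b : OrthonormalBasis (Fin n) ℝ (EuclideanSpace ℝ (Fin n)))
    (w : Fin n → ℝ) : w ⬝ᵥ w = ∑ k, ((b k : Fin n → ℝ) ⬝ᵥ w)^2 := by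
  calc w ⬝ᵥ w = ∑ x, w x * ∑ k, ((b k : Fin n → ℝ) ⬝ᵥ w) * (b k : Fin n → ℝ) x := by
        exact Finset.sum_congr rfl fun x _ => by rw [← ob_expand b w x]
    _ = ∑ k, ((b k : Fin n → ℝ) ⬝ᵥ w)^2 := by
        simp_rw [Finset.mul_sum]
        rw [Finset.sum_comm]
        refine Finset.sum_congr rfl fun k _ => ?_
        have h : ∑ x, w x * (((b k : Fin n → ℝ) ⬝ᵥ w) * (b k : Fin n → ℝ) x)
            = ((b k : Fin n → ℝ) ⬝ᵥ w) * ∑ x, (b k : Fin n → ℝ) x * w x := by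
          rw [Finset.mul_sum]; exact Finset.sum_congr rfl fun x _ => by ring
        rw [h, sq]; rfl

set_option maxHeartbeats 1000000 in
theorem lazy_walk_mixing (n : ℕ) (A : Matrix (Fin n) (Fin n) ℝ)
    (hsym : A.IsSymm) (hnonneg : ∀ i j, 0 ≤ A i j) (hloop : ∀ i, A i i = 0)
    (hdpos : ∀ i, 0 < ∑ j, A i j)
    (L : Matrix (Fin n) (Fin n) ℝ)
    (hL : L = Matrix.diagonal (fun i => ∑ j, A i j) - A)
    (hconn : ∀ x : Fin n → ℝ, L.mulVec x = 0 → ∃ c : ℝ, ∀ i, x i = c)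
    (X : Matrix (Fin n) (Fin n) ℝ)
    (hX : X = (1 / 2 : ℝ) • (1 : Matrix (Fin n) (Fin n) ℝ)
        + (1 / 2 : ℝ) • (A * Matrix.diagonal (fun i => (∑ j, A i j)⁻¹)))
    (pi : Fin n → ℝ) (hpi : pi = fun i => (∑ j, A i j) / ∑ i, ∑ j, A i j)
    (nu2 : ℝ)
    (hnu2 : nu2 = lambda2 (Matrix.diagonal (fun i => (Real.sqrt (∑ j, A i j))⁻¹)
        * L * Matrix.diagonal (fun i => (Real.sqrt (∑ j, A i j))⁻¹)))
    (dmax dmin : ℝ)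
    (hdmax : IsGreatest (Set.range fun i => ∑ j, A i j) dmax)
    (hdmin : IsLeast (Set.range fun i => ∑ j, A i j) dmin)
    (p : Fin n → ℝ) (hp : ∀ i, 0 ≤ p i) (hp1 : ∑ i, p i = 1) (t : ℕ) :
    ∑ i, |((X ^ t).mulVec p) i - pi i|
      ≤ Real.exp (-(t : ℝ) * nu2 / 2) * n * dmax / dmin := by
  classical
  -- basic facts
  have hsym' : ∀ i j, A i j = A j i := by
    intro i j
    conv_lhs => rw [← hsym]
    rfl
  set sd : Fin n → ℝ := fun i => Real.sqrt (∑ j, A i j) with hsd_def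
  have hsd0 : ∀ i, 0 < sd i := fun i => Real.sqrt_pos.2 (hdpos i)
  have hsd2 : ∀ i, sd i * sd i = ∑ j, A i j := fun i => Real.mul_self_sqrt (hdpos i).le
  -- n ≥ 2
  obtain ⟨i0', hi0'⟩ := hdmin.1
  have hn1 : 0 < n := i0'.pos
  have hn2 : 2 ≤ n := by
    by_contra h
    push_neg at h
    have hn1' : n = 1 := by omega
    subst hn1'
    have h1 := hdpos 0
    have h2 : ∑ j : Fin 1, A 0 j = A 0 0 := by simp
    rw [h2, hloop 0] at h1
    exact lt_irrefl 0 h1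
  have : Nonempty (Fin n) := ⟨i0'⟩
  set S : ℝ := ∑ i, ∑ j, A i j with hS_def
  have hS : 0 < S := Finset.sum_pos (fun i _ => hdpos i) Finset.univ_nonempty
  have hdminpos : 0 < dmin := by rw [← hi0']; exact hdpos i0'
  have hdmin_le : ∀ i, dmin ≤ ∑ j, A i j := fun i => hdmin.2 ⟨i, rfl⟩
  have hle_dmax : ∀ i, ∑ j, A i j ≤ dmax := fun i => hdmax.2 ⟨i, rfl⟩
  have hdmindmax : dmin ≤ dmax := le_trans (hdmin_le i0') (hle_dmax i0')
  -- matrices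
  set c : Fin n → ℝ := fun i => (sd i)⁻¹ with hc_def
  set N : Matrix (Fin n) (Fin n) ℝ := Matrix.diagonal c * L * Matrix.diagonal c with hN_def
  have hnu2' : nu2 = lambda2 N := hnu2
  have hLsym : Lᵀ = L := by
    rw [hL, Matrix.transpose_sub, Matrix.diagonal_transpose, hsym.eq]
  have hNsym : Nᵀ = N := by
    rw [hN_def, Matrix.transpose_mul, Matrix.transpose_mul, Matrix.diagonal_transpose, hLsym,
      Matrix.mul_assoc]
  have hpair : ∀ v w : Fin n → ℝ, v ⬝ᵥ (N *ᵥ w) = (N *ᵥ v) ⬝ᵥ w := by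
    intro v w
    rw [Matrix.dotProduct_mulVec]
    conv_lhs => rw [← hNsym, Matrix.vecMul_transpose]
  have hdotnn : ∀ x : Fin n → ℝ, 0 ≤ x ⬝ᵥ x :=
    fun x => Finset.sum_nonneg fun i _ => mul_self_nonneg _
  have hdotpos : ∀ x : Fin n → ℝ, x ≠ 0 → 0 < x ⬝ᵥ x := by
    intro x hx
    have h1 : ∃ i, x i ≠ 0 := by
      by_contra h; push_neg at h; exact hx (funext h)
    obtain ⟨i, hi⟩ := h1
    calc (0:ℝ) < x i * x i := mul_self_pos.2 hi
      _ ≤ ∑ j, x j * x j :=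
        Finset.single_le_sum (f := fun j => x j * x j)
          (fun j _ => mul_self_nonneg _) (Finset.mem_univ i)
  -- quadratic form identities
  have hdiagc : ∀ x : Fin n → ℝ, Matrix.diagonal c *ᵥ x = fun i => c i * x i :=
    fun x => funext fun i => mulVec_diagonal _ _ _
  have hQ : ∀ x : Fin n → ℝ,
      x ⬝ᵥ (N *ᵥ x) = (fun i => c i * x i) ⬝ᵥ (L *ᵥ (fun i => c i * x i)) := by
    intro x
    rw [hN_def, ← Matrix.mulVec_mulVec, ← Matrix.mulVec_mulVec]
    simp only [hdiagc]
    simp only [dotProduct]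
    exact Finset.sum_congr rfl fun i _ => by ring
  have hLquad : ∀ v : Fin n → ℝ,
      v ⬝ᵥ (L *ᵥ v) = (1/2) * ∑ i, ∑ j, A i j * (v i - v j)^2 := by
    intro v; rw [hL]; exact lap_quad hsym' v
  have hpsd : ∀ x : Fin n → ℝ, 0 ≤ x ⬝ᵥ (N *ᵥ x) := by
    intro x
    rw [hQ, hLquad]
    have : ∀ i j : Fin n, 0 ≤ A i j * ((fun i => c i * x i) i - (fun i => c i * x i) j)^2 :=
      fun i j => mul_nonneg (hnonneg i j) (sq_nonneg _)
    exact mul_nonneg (by norm_num)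
      (Finset.sum_nonneg fun i _ => Finset.sum_nonneg fun j _ => this i j)
  have hxw : ∀ x : Fin n → ℝ, x ⬝ᵥ x = ∑ i, ∑ j, A i j * (c i * x i)^2 := by
    intro x
    refine Finset.sum_congr rfl fun i _ => ?_
    rw [← Finset.sum_mul]
    have h2 := hsd2 i
    have h3 := (hsd0 i).ne'
    rw [hc_def]
    field_simp
    linear_combination (x i * x i) * h2
  have hle2 : ∀ x : Fin n → ℝ, x ⬝ᵥ (N *ᵥ x) ≤ 2 * (x ⬝ᵥ x) := by
    intro x
    rw [hQ, hLquad, hxw x]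
    set w : Fin n → ℝ := fun i => c i * x i
    calc (1/2) * ∑ i, ∑ j, A i j * (w i - w j)^2
        ≤ (1/2) * ∑ i, ∑ j, A i j * (2 * w i^2 + 2 * w j^2) := by
          have : ∀ i ∈ Finset.univ, ∑ j, A i j * (w i - w j)^2
              ≤ ∑ j, A i j * (2 * w i^2 + 2 * w j^2) := by
            intro i _
            refine Finset.sum_le_sum fun j _ => ?_
            have := hnonneg i j
            nlinarith [sq_nonneg (w i + w j)]
          linarith [Finset.sum_le_sum this]
    _ = 2 * ∑ i, ∑ j, A i j * w i^2 := by
          have e1 : ∀ i j : Fin n, A i j * (2 * w i^2 + 2 * w j^2)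
              = 2 * (A i j * w i^2) + 2 * (A i j * w j^2) := fun i j => by ring
          simp_rw [e1]
          rw [Finset.sum_congr rfl fun i _ => Finset.sum_add_distrib,
            Finset.sum_add_distrib]
          simp_rw [← Finset.mul_sum]
          rw [swap_sum hsym' (fun i => w i ^ 2)]
          ring
    _ = 2 * ∑ i, ∑ j, A i j * (c i * x i)^2 := rfl
  -- N * sd = 0 and kernel
  have hone : Matrix.diagonal c *ᵥ sd = fun _ => (1:ℝ) := by
    funext i
    rw [mulVec_diagonal]
    exact inv_mul_cancel₀ (hsd0 i).ne'
  have hLone : L *ᵥ (fun _ => (1:ℝ)) = 0 := by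
    funext i
    rw [hL, Matrix.sub_mulVec]
    have h1 : (Matrix.diagonal (fun i => ∑ j, A i j) *ᵥ fun _ => (1:ℝ)) i = ∑ j, A i j := by
      rw [mulVec_diagonal]; ring
    have h2 : (A *ᵥ fun _ => (1:ℝ)) i = ∑ j, A i j := by
      simp [mulVec, dotProduct]
    simp [h1, h2]
  have hNsd : N *ᵥ sd = 0 := by
    rw [hN_def, ← Matrix.mulVec_mulVec, ← Matrix.mulVec_mulVec, hone, hLone, Matrix.mulVec_zero]
  have hker : ∀ x : Fin n → ℝ, N *ᵥ x = 0 → ∃ k : ℝ, x = fun i => k * sd i := by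
    intro x hx
    have h1 : Matrix.diagonal c *ᵥ (L *ᵥ (fun i => c i * x i)) = 0 := by
      rw [← hdiagc, Matrix.mulVec_mulVec, Matrix.mulVec_mulVec]
      exact hx
    have h2 : L *ᵥ (fun i => c i * x i) = 0 := by
      funext i
      have h4 := congrFun h1 i
      rw [mulVec_diagonal] at h4
      have hci : c i ≠ 0 := inv_ne_zero (hsd0 i).ne'
      have h6 := (mul_eq_zero.1 h4).resolve_left hci
      simpa using h6
    obtain ⟨k, hk⟩ := hconn _ h2
    refine ⟨k, funext fun i => ?_⟩
    have h3 : c i * x i = k := hk i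
    have h5 : x i = sd i * (c i * x i) := by
      have h6 : sd i * c i = 1 := mul_inv_cancel₀ (hsd0 i).ne'
      calc x i = (sd i * c i) * x i := by rw [h6]; ring
        _ = sd i * (c i * x i) := by ring
    rw [h5, h3]; ring
  -- Rayleigh quotient lower bound on the orthogonal complement of sd
  have hray : ∀ x : Fin n → ℝ, x ⬝ᵥ sd = 0 → x ≠ 0 → nu2 * (x ⬝ᵥ x) ≤ x ⬝ᵥ (N *ᵥ x) := by
    intro x hxu hx0
    have hxx : 0 < x ⬝ᵥ x := hdotpos x hx0
    have hss : 0 < sd ⬝ᵥ sd := hdotpos sd (fun h => (hsd0 i0').ne' (congrFun h i0'))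
    have hind : LinearIndependent ℝ ![sd, x] := by
      rw [LinearIndependent.pair_iff]
      intro s' t' hst
      have h0 := congrArg (fun v => v ⬝ᵥ sd) hst
      simp only [add_dotProduct, smul_dotProduct, smul_eq_mul,
        zero_dotProduct] at h0
      rw [hxu, mul_zero, add_zero] at h0
      have hs0 : s' = 0 := by
        rcases mul_eq_zero.1 h0 with h | h
        · exact h
        · exact absurd h hss.ne'
      subst hs0
      rw [zero_smul, zero_add] at hst
      have h1 := congrArg (fun v => v ⬝ᵥ x) hst
      simp only [smul_dotProduct, smul_eq_mul, zero_dotProduct] at h1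
      rcases mul_eq_zero.1 h1 with h | h
      · exact ⟨rfl, h⟩
      · exact absurd h hxx.ne'
    have hrange : Set.range ![sd, x] = {sd, x} := by
      ext v
      simp [Fin.exists_fin_two]
      tauto
    have hU2 : Module.finrank ℝ (Submodule.span ℝ ({sd, x} : Set (Fin n → ℝ))) = 2 := by
      rw [← hrange, finrank_span_eq_card hind, Fintype.card_fin]
    set U : {U : Submodule ℝ (Fin n → ℝ) // Module.finrank ℝ U = 2} :=
      ⟨Submodule.span ℝ ({sd, x} : Set (Fin n → ℝ)), hU2⟩ with hU_def
    have hmemx : x ∈ U.1 := Submodule.subset_span (by simp)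
    have hne : Nonempty {z : Fin n → ℝ // z ∈ U.1 ∧ z ≠ 0} := ⟨⟨x, hmemx, hx0⟩⟩
    have hbdd : BddBelow (Set.range fun (V : {V : Submodule ℝ (Fin n → ℝ) // Module.finrank ℝ V = 2}) =>
        ⨆ z : {z : Fin n → ℝ // z ∈ V.1 ∧ z ≠ 0}, (z.1 ⬝ᵥ N.mulVec z.1) / (z.1 ⬝ᵥ z.1)) := by
      refine ⟨0, ?_⟩
      rintro r ⟨V, rfl⟩
      have hVne : Nonempty {z : Fin n → ℝ // z ∈ V.1 ∧ z ≠ 0} := by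
        have hVbot : V.1 ≠ ⊥ := by
          intro hb
          have := V.2
          rw [hb] at this
          simp at this
        obtain ⟨z, hz, hz0⟩ := Submodule.exists_mem_ne_zero_of_ne_bot hVbot
        exact ⟨⟨z, hz, hz0⟩⟩
      exact Real.iSup_nonneg fun z => div_nonneg (hpsd z.1) (hdotnn z.1)
    have hinf_le : nu2 ≤ ⨆ z : {z : Fin n → ℝ // z ∈ U.1 ∧ z ≠ 0},
        (z.1 ⬝ᵥ N.mulVec z.1) / (z.1 ⬝ᵥ z.1) := by
      rw [hnu2']
      exact ciInf_le hbdd U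
    have hsup_le : (⨆ z : {z : Fin n → ℝ // z ∈ U.1 ∧ z ≠ 0},
        (z.1 ⬝ᵥ N.mulVec z.1) / (z.1 ⬝ᵥ z.1)) ≤ (x ⬝ᵥ N.mulVec x) / (x ⬝ᵥ x) := by
      apply ciSup_le
      rintro ⟨z, hz, hz0⟩
      obtain ⟨a, b', hab⟩ := Submodule.mem_span_pair.1 hz
      have hzz : 0 < z ⬝ᵥ z := hdotpos z hz0
      have hNsd0 : ∀ v : Fin n → ℝ, v ⬝ᵥ (N *ᵥ sd) = 0 := by
        intro v; rw [hNsd, dotProduct_zero]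
      have hsdNx : sd ⬝ᵥ (N *ᵥ x) = 0 := by rw [hpair, hNsd, zero_dotProduct]
      have hzNz : z ⬝ᵥ (N *ᵥ z) = b'^2 * (x ⬝ᵥ (N *ᵥ x)) := by
        rw [← hab]
        rw [Matrix.mulVec_add, Matrix.mulVec_smul, Matrix.mulVec_smul]
        simp only [add_dotProduct, dotProduct_add, smul_dotProduct,
          dotProduct_smul, smul_eq_mul]
        rw [hNsd]
        simp only [smul_zero, dotProduct_zero]
        rw [hsdNx]
        ring
      have hzz' : z ⬝ᵥ z = a^2 * (sd ⬝ᵥ sd) + b'^2 * (x ⬝ᵥ x) := by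
        rw [← hab]
        simp only [add_dotProduct, dotProduct_add, smul_dotProduct,
          dotProduct_smul, smul_eq_mul]
        have hsx : sd ⬝ᵥ x = 0 := by rw [dotProduct_comm]; exact hxu
        rw [hxu, hsx]
        ring
      rw [hzNz, div_le_div_iff₀ hzz hxx, hzz']
      have hQx := hpsd x
      nlinarith [mul_nonneg (mul_nonneg (sq_nonneg a) hss.le) (hpsd x)]
    have hcomb := hinf_le.trans hsup_le
    rw [le_div_iff₀ hxx] at hcomb
    linarith [hcomb]
  -- nu2 ≤ 2
  have hnu2le2 : nu2 ≤ 2 := by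
    set i1 : Fin n := ⟨0, by omega⟩
    set i2 : Fin n := ⟨1, by omega⟩
    have hi12 : i1 ≠ i2 := by
      intro h
      have := congrArg Fin.val h
      simp [i1, i2] at this
    set x : Fin n → ℝ := Pi.single i1 (sd i2) - Pi.single i2 (sd i1) with hx_def
    have hxu : x ⬝ᵥ sd = 0 := by
      rw [hx_def, sub_dotProduct, single_dotProduct, single_dotProduct]
      ring
    have hx0 : x ≠ 0 := by
      intro h
      have h1 := congrFun h i1
      rw [hx_def] at h1
      simp only [Pi.sub_apply, Pi.zero_apply] at h1
      rw [Pi.single_eq_of_ne hi12, Pi.single_eq_same] at h1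
      exact (hsd0 i2).ne' (by linarith)
    have h1 := hray x hxu hx0
    have h2 := hle2 x
    have h3 : 0 < x ⬝ᵥ x := hdotpos x hx0
    nlinarith
  -- spectral decomposition
  have hNh : N.IsHermitian := by
    rw [Matrix.IsHermitian, Matrix.conjTranspose_eq_transpose_of_trivial]
    exact hNsym
  set b := hNh.eigenvectorBasis with hb_def
  set mu := hNh.eigenvalues with hmu_def
  have hbv : ∀ k, N *ᵥ (b k : Fin n → ℝ) = mu k • (b k : Fin n → ℝ) :=
    fun k => hNh.mulVec_eigenvectorBasis k
  have hbself : ∀ k, (b k : Fin n → ℝ) ⬝ᵥ (b k : Fin n → ℝ) = 1 := by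
    intro k
    rw [ob_dot, WithLp.toLp_ofLp, OrthonormalBasis.repr_self]
    simp [EuclideanSpace.single_apply]
  have hmuval : ∀ k, (b k : Fin n → ℝ) ⬝ᵥ (N *ᵥ (b k : Fin n → ℝ)) = mu k := by
    intro k
    rw [hbv k, dotProduct_smul, smul_eq_mul, hbself k, mul_one]
  have hbnz : ∀ k, (b k : Fin n → ℝ) ≠ 0 := by
    intro k h
    have := hbself k
    rw [h] at this
    simp at this
  have hmu0 : ∀ k, 0 ≤ mu k := fun k => (hmuval k) ▸ hpsd _
  have hmu2 : ∀ k, mu k ≤ 2 := by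
    intro k
    have h1 := hle2 (b k : Fin n → ℝ)
    rw [hmuval k, hbself k, mul_one] at h1
    exact h1
  set M : Matrix (Fin n) (Fin n) ℝ := 1 - (1/2 : ℝ) • N with hM_def
  have hMsym : Mᵀ = M := by
    rw [hM_def, Matrix.transpose_sub, Matrix.transpose_one, Matrix.transpose_smul, hNsym]
  have hMb : ∀ k, M *ᵥ (b k : Fin n → ℝ) = (1 - mu k / 2) • (b k : Fin n → ℝ) := by
    intro k
    rw [hM_def, Matrix.sub_mulVec, Matrix.one_mulVec, Matrix.smul_mulVec, hbv k]
    funext i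
    simp only [Pi.sub_apply, Pi.smul_apply, PiLp.smul_apply, smul_eq_mul]
    ring
  have hMt : ∀ (s : ℕ) (k : Fin n), (M ^ s) *ᵥ (b k : Fin n → ℝ)
      = ((1 - mu k / 2) ^ s) • (b k : Fin n → ℝ) := by
    intro s k
    induction s with
    | zero => rw [pow_zero, pow_zero, Matrix.one_mulVec, one_smul]
    | succ m ih =>
        rw [pow_succ, ← Matrix.mulVec_mulVec, hMb k, Matrix.mulVec_smul, ih, smul_smul,
          pow_succ, mul_comm ((1 - mu k / 2)) ((1 - mu k / 2) ^ m)]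
  have hMtsym : ((M ^ t)ᵀ : Matrix (Fin n) (Fin n) ℝ) = M ^ t := by
    rw [Matrix.transpose_pow, hMsym]
  have hMsd : M *ᵥ sd = sd := by
    rw [hM_def, Matrix.sub_mulVec, Matrix.one_mulVec, Matrix.smul_mulVec, hNsd,
      smul_zero, sub_zero]
  have hMtsd : ∀ s : ℕ, (M ^ s) *ᵥ sd = sd := by
    intro s
    induction s with
    | zero => rw [pow_zero, Matrix.one_mulVec]
    | succ m ih => rw [pow_succ, ← Matrix.mulVec_mulVec, hMsd, ih]
  -- contraction on the orthogonal complement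
  have hcontr : ∀ y : Fin n → ℝ, y ⬝ᵥ sd = 0 →
      ((M ^ t) *ᵥ y) ⬝ᵥ ((M ^ t) *ᵥ y) ≤ ((1 - nu2/2)^t)^2 * (y ⬝ᵥ y) := by
    intro y hyu
    have hzc : ∀ k, (b k : Fin n → ℝ) ⬝ᵥ ((M ^ t) *ᵥ y)
        = ((1 - mu k / 2)^t) * ((b k : Fin n → ℝ) ⬝ᵥ y) := by
      intro k
      rw [Matrix.dotProduct_mulVec]
      conv_lhs => rw [← hMtsym, Matrix.vecMul_transpose, hMt t k]
      rw [smul_dotProduct, smul_eq_mul]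
    rw [ob_parseval b ((M ^ t) *ᵥ y), ob_parseval b y, Finset.mul_sum]
    refine Finset.sum_le_sum fun k _ => ?_
    rw [hzc k, mul_pow]
    by_cases hck : (b k : Fin n → ℝ) ⬝ᵥ y = 0
    · simp [hck]
    · have hnule : nu2 ≤ mu k := by
        rcases eq_or_ne (mu k) 0 with h | h
        · exfalso
          have hNb : N *ᵥ (b k : Fin n → ℝ) = 0 := by rw [hbv k, h, zero_smul]
          obtain ⟨kc, hkc⟩ := hker _ hNb
          apply hck
          rw [hkc]
          have h5 : (fun i => kc * sd i) ⬝ᵥ y = kc * (sd ⬝ᵥ y) := by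
            simp [dotProduct, Finset.mul_sum, mul_assoc]
          rw [h5, dotProduct_comm, hyu, mul_zero]
        · have hbu : (b k : Fin n → ℝ) ⬝ᵥ sd = 0 := by
            have h3 : mu k * ((b k : Fin n → ℝ) ⬝ᵥ sd) = 0 := by
              have h4 : (b k : Fin n → ℝ) ⬝ᵥ (N *ᵥ sd) = (N *ᵥ (b k : Fin n → ℝ)) ⬝ᵥ sd :=
                hpair _ _
              rw [hNsd, dotProduct_zero, hbv k, smul_dotProduct] at h4
              rw [smul_eq_mul] at h4
              linarith [h4]
            exact (mul_eq_zero.1 h3).resolve_left h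
          have h6 := hray (b k : Fin n → ℝ) hbu (hbnz k)
          rw [hbself k, mul_one, hmuval k] at h6
          exact h6
      have h0 : (0:ℝ) ≤ 1 - mu k / 2 := by linarith [hmu2 k]
      have h1 : 1 - mu k / 2 ≤ 1 - nu2 / 2 := by linarith
      have h2 : ((1 - mu k/2)^t)^2 ≤ ((1 - nu2/2)^t)^2 :=
        pow_le_pow_left₀ (pow_nonneg h0 t) (pow_le_pow_left₀ h0 h1 t) 2
      exact mul_le_mul_of_nonneg_right h2 (sq_nonneg _)
  -- conjugation identity X = D^{1/2} M D^{-1/2}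
  have hXM : X = Matrix.diagonal sd * M * Matrix.diagonal c := by
    ext i j
    rw [Matrix.mul_diagonal, Matrix.diagonal_mul, hX, hM_def]
    rw [Matrix.add_apply, Matrix.smul_apply, Matrix.smul_apply, Matrix.mul_diagonal,
      Matrix.sub_apply, Matrix.smul_apply]
    rw [hN_def, Matrix.mul_diagonal, Matrix.diagonal_mul, hL, Matrix.sub_apply]
    by_cases hij : i = j
    · subst hij
      simp only [Matrix.one_apply_eq, Matrix.diagonal_apply_eq, hloop i, smul_eq_mul]
      have h2 := hsd2 i
      have h3 := (hsd0 i).ne'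
      have h4 := (hdpos i).ne'
      simp only [hc_def]
      field_simp
      linear_combination (-(∑ j, A i j)) * h2
    · simp only [Matrix.one_apply_ne hij, Matrix.diagonal_apply_ne _ hij, smul_eq_mul]
      have h2 := hsd2 j
      have h3 := (hsd0 i).ne'
      have h4 := (hsd0 j).ne'
      simp only [hc_def]
      field_simp
      have h5 : (∑ k, A j k) * (∑ k, A j k)⁻¹ = 1 := mul_inv_cancel₀ (hdpos j).ne'
      linear_combination (A i j * (∑ k, A j k)⁻¹) * h2 + (A i j) * h5
  have hCD : Matrix.diagonal c * Matrix.diagonal sd = 1 := by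
    rw [Matrix.diagonal_mul_diagonal]
    have h1 : (fun i => c i * sd i) = fun _ => (1:ℝ) :=
      funext fun i => inv_mul_cancel₀ (hsd0 i).ne'
    rw [h1, Matrix.diagonal_one]
  have hXt : ∀ s : ℕ, X ^ s = Matrix.diagonal sd * M ^ s * Matrix.diagonal c := by
    intro s
    induction s with
    | zero =>
        rw [pow_zero, pow_zero, Matrix.mul_one, Matrix.diagonal_mul_diagonal]
        have h1 : (fun i => sd i * c i) = fun _ => (1:ℝ) :=
          funext fun i => mul_inv_cancel₀ (hsd0 i).ne'
        rw [h1, Matrix.diagonal_one]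
    | succ m ih =>
        rw [pow_succ, ih, hXM, pow_succ]
        simp only [Matrix.mul_assoc]
        rw [← Matrix.mul_assoc (Matrix.diagonal c) (Matrix.diagonal sd), hCD, Matrix.one_mul]
  -- decomposition of the initial vector
  set q : Fin n → ℝ := fun i => c i * p i with hq_def
  have hq : Matrix.diagonal c *ᵥ p = q := hdiagc p
  set y : Fin n → ℝ := q - (S⁻¹) • sd with hy_def
  have hqu : q ⬝ᵥ sd = 1 := by
    have h1 : ∀ i : Fin n, q i * sd i = p i := by
      intro i
      show (sd i)⁻¹ * p i * sd i = p i
      field_simp [(hsd0 i).ne']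
    calc q ⬝ᵥ sd = ∑ i, q i * sd i := rfl
      _ = ∑ i, p i := Finset.sum_congr rfl fun i _ => h1 i
      _ = 1 := hp1
  have huu : sd ⬝ᵥ sd = S := by
    calc sd ⬝ᵥ sd = ∑ i, sd i * sd i := rfl
      _ = ∑ i, ∑ j, A i j := Finset.sum_congr rfl fun i _ => hsd2 i
  have hyu : y ⬝ᵥ sd = 0 := by
    rw [hy_def, sub_dotProduct, smul_dotProduct, hqu, smul_eq_mul, huu,
      inv_mul_cancel₀ hS.ne', sub_self]
  have hqy : q = y + S⁻¹ • sd := by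
    rw [hy_def]
    abel
  have hMq : (M ^ t) *ᵥ q = ((M ^ t) *ᵥ y) + S⁻¹ • sd := by
    rw [hqy, Matrix.mulVec_add, Matrix.mulVec_smul, hMtsd t]
  have hdiff : ∀ i, ((X ^ t) *ᵥ p) i - pi i = sd i * (((M ^ t) *ᵥ y) i) := by
    intro i
    rw [hXt t, ← Matrix.mulVec_mulVec, ← Matrix.mulVec_mulVec, hq, hMq, hpi]
    rw [mulVec_diagonal]
    simp only [Pi.add_apply, Pi.smul_apply, smul_eq_mul]
    have h2 := hsd2 i
    linear_combination S⁻¹ * h2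
  set z : Fin n → ℝ := (M ^ t) *ᵥ y with hz_def
  have hzz : z ⬝ᵥ z ≤ ((1 - nu2/2)^t)^2 * (y ⬝ᵥ y) := hcontr y hyu
  have hyy : y ⬝ᵥ y ≤ dmin⁻¹ := by
    have h1 : y ⬝ᵥ y = q ⬝ᵥ q - S⁻¹ := by
      rw [hy_def]
      simp only [sub_dotProduct, dotProduct_sub, smul_dotProduct,
        dotProduct_smul, smul_eq_mul]
      rw [huu, hqu, dotProduct_comm sd q, hqu]
      field_simp
      ring
    have h2 : q ⬝ᵥ q ≤ dmin⁻¹ := by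
      have hple : ∀ i, p i ≤ 1 := fun i =>
        hp1 ▸ Finset.single_le_sum (fun j _ => hp j) (Finset.mem_univ i)
      calc q ⬝ᵥ q = ∑ i, q i * q i := rfl
        _ ≤ ∑ i, dmin⁻¹ * p i := by
            refine Finset.sum_le_sum fun i _ => ?_
            show ((sd i)⁻¹ * p i) * ((sd i)⁻¹ * p i) ≤ dmin⁻¹ * p i
            have e1 : (sd i)⁻¹ * (sd i)⁻¹ = (∑ j, A i j)⁻¹ := by
              rw [← mul_inv, hsd2 i]
            have e2 : (∑ j, A i j)⁻¹ ≤ dmin⁻¹ := inv_anti₀ hdminpos (hdmin_le i)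
            calc ((sd i)⁻¹ * p i) * ((sd i)⁻¹ * p i)
                = ((sd i)⁻¹ * (sd i)⁻¹) * (p i * p i) := by ring
              _ = (∑ j, A i j)⁻¹ * (p i * p i) := by rw [e1]
              _ ≤ dmin⁻¹ * (p i * p i) := mul_le_mul_of_nonneg_right e2 (mul_self_nonneg _)
              _ ≤ dmin⁻¹ * p i := by
                  refine mul_le_mul_of_nonneg_left ?_ (le_of_lt (inv_pos.2 hdminpos))
                  nlinarith [hp i, hple i]
        _ = dmin⁻¹ := by rw [← Finset.mul_sum, hp1, mul_one]
    have h3 : 0 < S⁻¹ := inv_pos.2 hS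
    linarith
  have habs : ∑ i, |((X ^ t).mulVec p) i - pi i| = ∑ i, sd i * |z i| := by
    refine Finset.sum_congr rfl fun i _ => ?_
    rw [hdiff i, abs_mul, abs_of_pos (hsd0 i)]
  have hsd_le : ∀ i, sd i ≤ Real.sqrt dmax := fun i => Real.sqrt_le_sqrt (hle_dmax i)
  have h5 : ∑ i, sd i * |z i| ≤ Real.sqrt dmax * ∑ i, |z i| := by
    rw [Finset.mul_sum]
    exact Finset.sum_le_sum fun i _ => mul_le_mul_of_nonneg_right (hsd_le i) (abs_nonneg _)
  have hzsum : (∑ i, |z i|)^2 ≤ (n : ℝ) * (z ⬝ᵥ z) := by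
    have h6 := sq_sum_le_card_mul_sum_sq
      (s := (Finset.univ : Finset (Fin n))) (f := fun i => |z i|)
    have h7 : ∑ i, |z i|^2 = z ⬝ᵥ z := by
      calc ∑ i, |z i|^2 = ∑ i, z i * z i :=
            Finset.sum_congr rfl fun i _ => by rw [sq_abs, sq]
        _ = z ⬝ᵥ z := rfl
    calc (∑ i, |z i|)^2 ≤ ((Finset.univ : Finset (Fin n)).card : ℝ) * ∑ i, |z i|^2 := by
          exact_mod_cast h6
      _ = (n : ℝ) * (z ⬝ᵥ z) := by rw [h7, Finset.card_univ, Fintype.card_fin]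
  set c1 : ℝ := (1 - nu2/2)^t with hc1_def
  have hc1nn : 0 ≤ c1 := pow_nonneg (by linarith [hnu2le2]) t
  have hzz2 : z ⬝ᵥ z ≤ c1^2 * dmin⁻¹ := by
    calc z ⬝ᵥ z ≤ c1^2 * (y ⬝ᵥ y) := hzz
      _ ≤ c1^2 * dmin⁻¹ := mul_le_mul_of_nonneg_left hyy (sq_nonneg c1)
  have hsumz : ∑ i, |z i| ≤ c1 * Real.sqrt ((n : ℝ) * dmin⁻¹) := by
    have h8 : (∑ i, |z i|)^2 ≤ c1^2 * ((n : ℝ) * dmin⁻¹) := by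
      calc (∑ i, |z i|)^2 ≤ (n : ℝ) * (z ⬝ᵥ z) := hzsum
        _ ≤ (n : ℝ) * (c1^2 * dmin⁻¹) :=
            mul_le_mul_of_nonneg_left hzz2 (Nat.cast_nonneg n)
        _ = c1^2 * ((n : ℝ) * dmin⁻¹) := by ring
    have h9 : 0 ≤ ∑ i, |z i| := Finset.sum_nonneg fun i _ => abs_nonneg _
    have hnn : 0 ≤ c1^2 * ((n : ℝ) * dmin⁻¹) :=
      mul_nonneg (sq_nonneg _) (mul_nonneg (Nat.cast_nonneg n) (inv_nonneg.2 hdminpos.le))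
    have h10 : c1 * Real.sqrt ((n : ℝ) * dmin⁻¹) = Real.sqrt (c1^2 * ((n : ℝ) * dmin⁻¹)) := by
      rw [Real.sqrt_mul (sq_nonneg c1), Real.sqrt_sq hc1nn]
    rw [h10]
    exact (Real.le_sqrt h9 hnn).2 h8
  have hdmax0 : (0:ℝ) ≤ dmax := le_trans hdminpos.le hdmindmax
  have hfin : Real.sqrt dmax * (c1 * Real.sqrt ((n : ℝ) * dmin⁻¹))
      ≤ Real.exp (-(t:ℝ) * nu2 / 2) * ((n : ℝ) * dmax * dmin⁻¹) := by
    have hBsq : Real.sqrt dmax * Real.sqrt ((n : ℝ) * dmin⁻¹)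
        = Real.sqrt ((n : ℝ) * dmax * dmin⁻¹) := by
      rw [← Real.sqrt_mul hdmax0]
      congr 1
      ring
    have hn1' : (1:ℝ) ≤ n := by exact_mod_cast hn1
    have hB1 : (1:ℝ) ≤ (n : ℝ) * dmax * dmin⁻¹ := by
      have h13 : (1:ℝ) ≤ dmax * dmin⁻¹ := by
        rw [← div_eq_mul_inv]
        exact (one_le_div hdminpos).2 hdmindmax
      nlinarith
    have hsqrtB : Real.sqrt ((n : ℝ) * dmax * dmin⁻¹) ≤ (n : ℝ) * dmax * dmin⁻¹ := by
      have h11 : Real.sqrt ((n : ℝ) * dmax * dmin⁻¹)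
          ≤ Real.sqrt (((n : ℝ) * dmax * dmin⁻¹)^2) := Real.sqrt_le_sqrt (by nlinarith)
      rwa [Real.sqrt_sq (by linarith)] at h11
    have hc1E : c1 ≤ Real.exp (-(t:ℝ) * nu2 / 2) := by
      have h12 : 1 - nu2/2 ≤ Real.exp (-(nu2/2)) := by
        have h14 := Real.add_one_le_exp (-(nu2/2))
        linarith
      calc c1 ≤ (Real.exp (-(nu2/2)))^t := pow_le_pow_left₀ (by linarith [hnu2le2]) h12 t
        _ = Real.exp (-(t:ℝ) * nu2 / 2) := by
            rw [← Real.exp_nat_mul]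
            congr 1
            ring
    calc Real.sqrt dmax * (c1 * Real.sqrt ((n : ℝ) * dmin⁻¹))
        = c1 * (Real.sqrt dmax * Real.sqrt ((n : ℝ) * dmin⁻¹)) := by ring
      _ = c1 * Real.sqrt ((n : ℝ) * dmax * dmin⁻¹) := by rw [hBsq]
      _ ≤ Real.exp (-(t:ℝ) * nu2 / 2) * ((n : ℝ) * dmax * dmin⁻¹) :=
          mul_le_mul hc1E hsqrtB (Real.sqrt_nonneg _) (Real.exp_pos _).le
  calc ∑ i, |((X ^ t).mulVec p) i - pi i| = ∑ i, sd i * |z i| := habs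
    _ ≤ Real.sqrt dmax * ∑ i, |z i| := h5
    _ ≤ Real.sqrt dmax * (c1 * Real.sqrt ((n : ℝ) * dmin⁻¹)) :=
        mul_le_mul_of_nonneg_left hsumz (Real.sqrt_nonneg _)
    _ ≤ Real.exp (-(t:ℝ) * nu2 / 2) * ((n : ℝ) * dmax * dmin⁻¹) := hfin
    _ = Real.exp (-(t : ℝ) * nu2 / 2) * n * dmax / dmin := by ring
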